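/- Let (Z_t)_{t ∈ ℤ} be a stationary 𝒵-valued process with β-mixing coefficients β(k), let a, μ ≥ 1 be integers with n = 2aμ, let M > 0, let B and p be positive integers, and let ℱ be a finite set of measurable functions from 𝒵 to [0, M] with cardinality at most 2^{Bp}. For each ℓ_f ∈ ℱ set h_f(B_j) = (1/a) Σ_{i=1}^a ℓ_f(Z_{a(j−1)+i}) and L(f) = E[ℓ_f(Z_1)]. Then for each k ∈ {1, 2} and every ε > 0: P( ∃ ℓ_f ∈ ℱ : L(f) − (1/μ) Σ_{j=0}^{μ−1} h_f(B_{k+2j}) ≥ ε ) ≤ 2^{Bp} exp(−μ ε² / M²) + (μ − 1) β(a). -/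

import Mathlib

open MeasureTheory ProbabilityTheory

/-- Total variation distance between two measures. -/
noncomputable def tvDist {α : Type*} [MeasurableSpace α] (μ ν : Measure α) : ℝ :=
  ⨆ A : {A : Set α // MeasurableSet A}, |(μ A).toReal - (ν A).toReal|

/-- β-mixing coefficient of the process `Z` under `P`: the supremum over `t` of the
total variation distance between the joint law of `((Z s)_{s ≤ t}, (Z s)_{s ≥ t+k})`
and the product of the marginal laws. -/
noncomputable def betaMix {Ω 𝒵 : Type*} [MeasurableSpace Ω] [MeasurableSpace 𝒵]
    (P : Measure Ω) (Z : ℤ → Ω → 𝒵) (k : ℕ) : ℝ :=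
  ⨆ t : ℤ, tvDist
    (P.map (fun ω => (fun s : {s : ℤ // s ≤ t} => Z s ω,
                      fun s : {s : ℤ // t + k ≤ s} => Z s ω)))
    ((P.map (fun ω => fun s : {s : ℤ // s ≤ t} => Z s ω)).prod
      (P.map (fun ω => fun s : {s : ℤ // t + k ≤ s} => Z s ω)))

/-- Stationarity of the process `Z` under `P`. -/
def Stationary {Ω 𝒵 : Type*} [MeasurableSpace Ω] [MeasurableSpace 𝒵]
    (P : Measure Ω) (Z : ℤ → Ω → 𝒵) : Prop :=
  ∀ s : ℤ, P.map (fun ω => fun t : ℤ => Z (t + s) ω) = P.map (fun ω => fun t : ℤ => Z t ω)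

set_option maxHeartbeats 1000000
set_option linter.unusedSectionVars false
set_option linter.unusedVariables false
set_option linter.deprecated false

section TV
variable {α β : Type*} [MeasurableSpace α] [MeasurableSpace β]

lemma tvDist_nonneg (μ ν : Measure α) : 0 ≤ tvDist μ ν :=
  Real.iSup_nonneg fun _ => abs_nonneg _

lemma tvAux_le_one (μ ν : Measure α) [IsProbabilityMeasure μ] [IsProbabilityMeasure ν]
    (A : Set α) : |(μ A).toReal - (ν A).toReal| ≤ 1 := by
  have h1 : (μ A).toReal ≤ 1 := by
    simpa using ENNReal.toReal_mono (by simp) (prob_le_one (μ := μ) (s := A))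
  have h2 : (ν A).toReal ≤ 1 := by
    simpa using ENNReal.toReal_mono (by simp) (prob_le_one (μ := ν) (s := A))
  have h3 : 0 ≤ (μ A).toReal := ENNReal.toReal_nonneg
  have h4 : 0 ≤ (ν A).toReal := ENNReal.toReal_nonneg
  rw [abs_le]; constructor <;> linarith

lemma tvDist_le_one (μ ν : Measure α) [IsProbabilityMeasure μ] [IsProbabilityMeasure ν] :
    tvDist μ ν ≤ 1 :=
  Real.iSup_le (fun A => tvAux_le_one μ ν A) one_pos.le

lemma tvDist_bddAbove (μ ν : Measure α) [IsProbabilityMeasure μ] [IsProbabilityMeasure ν] :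
    BddAbove (Set.range fun A : {A : Set α // MeasurableSet A} =>
      |(μ (A : Set α)).toReal - (ν (A : Set α)).toReal|) :=
  ⟨1, by rintro x ⟨A, rfl⟩; exact tvAux_le_one μ ν A⟩

lemma abs_sub_le_tvDist (μ ν : Measure α) [IsProbabilityMeasure μ] [IsProbabilityMeasure ν]
    {A : Set α} (hA : MeasurableSet A) :
    |(μ A).toReal - (ν A).toReal| ≤ tvDist μ ν :=
  le_ciSup (tvDist_bddAbove μ ν) (⟨A, hA⟩ : {A : Set α // MeasurableSet A})

lemma tvDist_triangle (μ ν ρ : Measure α) [IsProbabilityMeasure μ] [IsProbabilityMeasure ν]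
    [IsProbabilityMeasure ρ] : tvDist μ ν ≤ tvDist μ ρ + tvDist ρ ν := by
  refine Real.iSup_le (fun A => ?_) (add_nonneg (tvDist_nonneg _ _) (tvDist_nonneg _ _))
  calc |(μ (A : Set α)).toReal - (ν (A : Set α)).toReal|
      ≤ |(μ (A : Set α)).toReal - (ρ (A : Set α)).toReal|
        + |(ρ (A : Set α)).toReal - (ν (A : Set α)).toReal| := abs_sub_le _ _ _
    _ ≤ tvDist μ ρ + tvDist ρ ν :=
        add_le_add (abs_sub_le_tvDist μ ρ A.2) (abs_sub_le_tvDist ρ ν A.2)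

lemma tvDist_map_le (μ ν : Measure α) [IsProbabilityMeasure μ] [IsProbabilityMeasure ν]
    {f : α → β} (hf : Measurable f) : tvDist (μ.map f) (ν.map f) ≤ tvDist μ ν := by
  refine Real.iSup_le (fun A => ?_) (tvDist_nonneg _ _)
  rw [Measure.map_apply hf A.2, Measure.map_apply hf A.2]
  exact abs_sub_le_tvDist μ ν (hf A.2)

lemma tvDist_prod_right (ρ : Measure α) (ν₁ ν₂ : Measure β) [IsProbabilityMeasure ρ]
    [IsProbabilityMeasure ν₁] [IsProbabilityMeasure ν₂] :
    tvDist (ρ.prod ν₁) (ρ.prod ν₂) ≤ tvDist ν₁ ν₂ := by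
  refine Real.iSup_le (fun S => ?_) (tvDist_nonneg _ _)
  set D := tvDist ν₁ ν₂ with hD
  have hD0 : 0 ≤ D := tvDist_nonneg _ _
  have key : ∀ (μ₁ μ₂ : Measure β), IsProbabilityMeasure μ₁ → IsProbabilityMeasure μ₂ →
      tvDist μ₁ μ₂ = D →
      ((ρ.prod μ₁) (S : Set (α × β))).toReal ≤ ((ρ.prod μ₂) (S : Set (α × β))).toReal + D := by
    intro μ₁ μ₂ h₁ h₂ hDeq
    have hpt : ∀ x : α, μ₁ (Prod.mk x ⁻¹' (S : Set (α × β)))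
        ≤ μ₂ (Prod.mk x ⁻¹' (S : Set (α × β))) + ENNReal.ofReal D := by
      intro x
      have hm : MeasurableSet (Prod.mk x ⁻¹' (S : Set (α × β))) := measurable_prodMk_left S.2
      have h := abs_sub_le_tvDist μ₁ μ₂ hm
      rw [hDeq] at h
      have h' := (abs_le.mp h).2
      have e1 : μ₁ (Prod.mk x ⁻¹' (S : Set (α × β)))
          = ENNReal.ofReal ((μ₁ (Prod.mk x ⁻¹' (S : Set (α × β)))).toReal) :=
        (ENNReal.ofReal_toReal (measure_ne_top _ _)).symm
      rw [e1]
      calc ENNReal.ofReal ((μ₁ (Prod.mk x ⁻¹' (S : Set (α × β)))).toReal)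
          ≤ ENNReal.ofReal ((μ₂ (Prod.mk x ⁻¹' (S : Set (α × β)))).toReal + D) :=
            ENNReal.ofReal_le_ofReal (by linarith)
        _ = ENNReal.ofReal ((μ₂ (Prod.mk x ⁻¹' (S : Set (α × β)))).toReal)
              + ENNReal.ofReal D := ENNReal.ofReal_add ENNReal.toReal_nonneg hD0
        _ = μ₂ (Prod.mk x ⁻¹' (S : Set (α × β))) + ENNReal.ofReal D := by
            rw [ENNReal.ofReal_toReal (measure_ne_top _ _)]
    have h1 : (ρ.prod μ₁) (S : Set (α × β)) ≤ (ρ.prod μ₂) (S : Set (α × β)) + ENNReal.ofReal D := by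
      rw [Measure.prod_apply S.2, Measure.prod_apply S.2]
      calc ∫⁻ x, μ₁ (Prod.mk x ⁻¹' (S : Set (α × β))) ∂ρ
          ≤ ∫⁻ x, (μ₂ (Prod.mk x ⁻¹' (S : Set (α × β))) + ENNReal.ofReal D) ∂ρ :=
            lintegral_mono hpt
        _ = (∫⁻ x, μ₂ (Prod.mk x ⁻¹' (S : Set (α × β))) ∂ρ) + ENNReal.ofReal D := by
            rw [lintegral_add_right _ measurable_const, lintegral_const]
            simp
    have hne : (ρ.prod μ₂) (S : Set (α × β)) + ENNReal.ofReal D ≠ ⊤ :=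
      ENNReal.add_ne_top.mpr ⟨measure_ne_top _ _, ENNReal.ofReal_ne_top⟩
    have := ENNReal.toReal_mono hne h1
    rwa [ENNReal.toReal_add (measure_ne_top _ _) ENNReal.ofReal_ne_top,
      ENNReal.toReal_ofReal hD0] at this
  have h12 := key ν₁ ν₂ inferInstance inferInstance rfl
  have h21 := key ν₂ ν₁ inferInstance inferInstance (by rw [hD]; unfold tvDist; congr 1; ext A; rw [abs_sub_comm])
  rw [abs_le]; constructor <;> linarith
end TV


def blockMap {Ω 𝒵 : Type*} (Z : ℤ → Ω → 𝒵) (a : ℕ) (b : ℤ) (ω : Ω) (i : Fin a) : 𝒵 :=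
  Z (b + (i : ℕ)) ω

lemma betaMix_nonneg {Ω 𝒵 : Type*} [MeasurableSpace Ω] [MeasurableSpace 𝒵]
    (P : Measure Ω) (Z : ℤ → Ω → 𝒵) (k : ℕ) : 0 ≤ betaMix P Z k :=
  Real.iSup_nonneg fun _ => tvDist_nonneg _ _

private lemma A1 {u : ℝ} (hu : 0 ≤ u) (hu2 : u ≤ 2) :
    (1 - Real.exp (-u)) * (2 + u) ^ 2 ≤ 8 * u := by
  have h5 : (1 - u / 5) ^ 5 ≤ Real.exp (-u) := by
    have h1 : 1 - u / 5 ≤ Real.exp (-(u / 5)) := by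
      have := Real.add_one_le_exp (-(u / 5)); linarith
    have h0 : 0 ≤ 1 - u / 5 := by linarith
    calc (1 - u / 5) ^ 5 ≤ (Real.exp (-(u / 5))) ^ 5 := pow_le_pow_left₀ h0 h1 5
      _ = Real.exp (-u) := by
        rw [← Real.exp_nat_mul]; congr 1; push_cast; ring
  have key : (1 - (1 - u / 5) ^ 5) * (2 + u) ^ 2 ≤ 8 * u := by
    nlinarith [sq_nonneg u, sq_nonneg (u - 1), sq_nonneg (u - 2), sq_nonneg (u * (2 - u)),
      mul_nonneg hu (sub_nonneg.mpr hu2), pow_le_pow_left₀ hu hu2 3,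
      mul_nonneg (mul_nonneg hu hu) (sub_nonneg.mpr hu2), sq_nonneg (u * u), sq_nonneg (u*u*u)]
  have hmono : (1 - Real.exp (-u)) * (2 + u) ^ 2 ≤ (1 - (1 - u / 5) ^ 5) * (2 + u) ^ 2 := by
    have : (0:ℝ) ≤ (2 + u) ^ 2 := sq_nonneg _
    nlinarith [h5, this]
  linarith

private lemma A2 {p u : ℝ} (hp0 : 0 ≤ p) (hp1 : p ≤ 1) (hu : 0 ≤ u) (hu2 : u ≤ 2) :
    Real.exp (p * u) * (1 - p + p * Real.exp (-u)) ≤ Real.exp (u ^ 2 / 4) := by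
  rcases eq_or_lt_of_le hp1 with hq | hq
  · subst hq
    have : Real.exp (1 * u) * (1 - 1 + 1 * Real.exp (-u)) = 1 := by
      rw [one_mul, show (1:ℝ) - 1 + 1 * Real.exp (-u) = Real.exp (-u) by ring,
        ← Real.exp_add, add_neg_cancel, Real.exp_zero]
    rw [this]
    exact Real.one_le_exp (by positivity)
  · -- p < 1
    set w : ℝ → ℝ := fun v => 1 - p + p * Real.exp (-v) with hw
    have hwpos : ∀ v, 0 < w v := fun v => by
      have : 0 ≤ p * Real.exp (-v) := mul_nonneg hp0 (Real.exp_nonneg _)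
      simp only [hw]; linarith
    set φ : ℝ → ℝ := fun v => v ^ 2 / 4 - p * v - Real.log (w v) with hφ
    have hder : ∀ v, HasDerivAt φ (v / 2 - p + p * Real.exp (-v) / w v) v := by
      intro v
      have h1 : HasDerivAt (fun v : ℝ => v ^ 2 / 4 - p * v) (v / 2 - p) v := by
        have := ((hasDerivAt_pow 2 v).div_const 4).sub ((hasDerivAt_id v).const_mul p)
        exact this.congr_deriv (by norm_num; ring)
      have hexp : HasDerivAt (fun v : ℝ => Real.exp (-v)) (-Real.exp (-v)) v := by
        have := (Real.hasDerivAt_exp (-v)).comp v (hasDerivAt_neg v)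
        exact this.congr_deriv (by ring)
      have hwd : HasDerivAt w (-(p * Real.exp (-v))) v := by
        have := (hexp.const_mul p).const_add (1 - p)
        exact this.congr_deriv (by ring)
      have hlog : HasDerivAt (fun v => Real.log (w v)) (-(p * Real.exp (-v)) / w v) v :=
        hwd.log (ne_of_gt (hwpos v))
      have := h1.sub hlog
      exact this.congr_deriv (by rw [neg_div, sub_neg_eq_add])
    have hder_nonneg : ∀ v ∈ Set.Ioo (0:ℝ) 2, 0 ≤ deriv φ v := by
      intro v hv
      rw [(hder v).deriv]
      have hs1 : Real.exp (-v) ≤ 1 := Real.exp_le_one_iff.mpr (by linarith [hv.1])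
      have hs0 : 0 < Real.exp (-v) := Real.exp_pos _
      have hnum : 0 ≤ (v / 2 - p) * w v + p * Real.exp (-v) := by
        have hA := A1 (le_of_lt hv.1) (le_of_lt hv.2)
        nlinarith [mul_nonneg (by linarith : (0:ℝ) ≤ 1 - Real.exp (-v))
          (sq_nonneg (4 * p - (2 + v)))]
      have : v / 2 - p + p * Real.exp (-v) / w v
          = ((v / 2 - p) * w v + p * Real.exp (-v)) / w v := by
        have hwv := (hwpos v).ne'
        field_simp
      rw [this]
      exact div_nonneg hnum (hwpos v).le
    have hmono : MonotoneOn φ (Set.Icc 0 2) := by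
      apply monotoneOn_of_deriv_nonneg (convex_Icc 0 2)
      · exact (Differentiable.continuous (fun v => (hder v).differentiableAt)).continuousOn
      · exact fun v _ => (hder v).differentiableAt.differentiableWithinAt
      · intro v hv
        rw [interior_Icc] at hv
        exact hder_nonneg v hv
    have h0 : φ 0 = 0 := by simp [hφ, hw]
    have hle : φ 0 ≤ φ u := hmono (Set.mem_Icc.mpr ⟨le_rfl, by norm_num⟩)
      (Set.mem_Icc.mpr ⟨hu, hu2⟩) hu
    rw [h0] at hle
    have : p * u + Real.log (w u) ≤ u ^ 2 / 4 := by simp only [hφ] at hle; linarith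
    calc Real.exp (p * u) * (1 - p + p * Real.exp (-u))
        = Real.exp (p * u + Real.log (w u)) := by
          rw [Real.exp_add, Real.exp_log (hwpos u)]
      _ ≤ Real.exp (u ^ 2 / 4) := Real.exp_le_exp.mpr this

private lemma mgf_bound {α : Type*} [MeasurableSpace α] (ν : MeasureTheory.Measure α)
    [MeasureTheory.IsProbabilityMeasure ν]
    (g : α → ℝ) (hg : Measurable g) (M : ℝ) (hM : 0 < M)
    (hgb : ∀ x, g x ∈ Set.Icc (0:ℝ) M) (t : ℝ) (ht : 0 ≤ t) (htM : t * M ≤ 2) :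
    ∫ x, Real.exp (t * ((∫ y, g y ∂ν) - g x)) ∂ν ≤ Real.exp ((t * M) ^ 2 / 4) := by
  set m := ∫ y, g y ∂ν with hm
  have hgint : MeasureTheory.Integrable g ν := by
    refine ⟨hg.aestronglyMeasurable, MeasureTheory.HasFiniteIntegral.of_bounded
      (C := M) (MeasureTheory.ae_of_all _ fun x => ?_)⟩
    rw [Real.norm_eq_abs, abs_of_nonneg (hgb x).1]; exact (hgb x).2
  have hm0 : 0 ≤ m := MeasureTheory.integral_nonneg fun x => (hgb x).1
  have hmM : m ≤ M := by
    have h := MeasureTheory.integral_mono hgint (MeasureTheory.integrable_const M)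
      (fun x => (hgb x).2)
    simpa using h
  set c₀ := Real.exp (t * m) with hc₀
  set c₁ := Real.exp (t * m) * ((Real.exp (-(t * M)) - 1) / M) with hc₁
  have hpt : ∀ x, Real.exp (t * (m - g x)) ≤ c₀ + c₁ * g x := by
    intro x
    have hθ0 : 0 ≤ g x / M := div_nonneg (hgb x).1 hM.le
    have hθ1 : g x / M ≤ 1 := (div_le_one hM).mpr (hgb x).2
    have hconv := convexOn_exp.2 (Set.mem_univ (0:ℝ)) (Set.mem_univ (-(t * M)))
      (by linarith : (0:ℝ) ≤ 1 - g x / M) hθ0 (by ring)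
    simp only [smul_eq_mul, mul_zero, zero_add, Real.exp_zero, mul_one] at hconv
    have he : g x / M * -(t * M) = -(t * g x) := by field_simp
    rw [he] at hconv
    have : Real.exp (t * (m - g x)) = Real.exp (t * m) * Real.exp (-(t * g x)) := by
      rw [← Real.exp_add]; ring_nf
    rw [this]
    have := mul_le_mul_of_nonneg_left hconv (Real.exp_nonneg (t * m))
    calc Real.exp (t * m) * Real.exp (-(t * g x))
        ≤ Real.exp (t * m) * (1 - g x / M + g x / M * Real.exp (-(t * M))) := this
      _ = c₀ + c₁ * g x := by rw [hc₀, hc₁]; field_simp; ring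
  have hlhs_int : MeasureTheory.Integrable (fun x => Real.exp (t * (m - g x))) ν := by
    refine ⟨(Real.measurable_exp.comp ((measurable_const.sub hg).const_mul t)).aestronglyMeasurable,
      MeasureTheory.HasFiniteIntegral.of_bounded (C := Real.exp (t * m))
        (MeasureTheory.ae_of_all _ fun x => ?_)⟩
    rw [Real.norm_eq_abs, abs_of_nonneg (Real.exp_nonneg _)]
    exact Real.exp_le_exp.mpr (by nlinarith [(hgb x).1])
  have hrhs_int : MeasureTheory.Integrable (fun x => c₀ + c₁ * g x) ν :=
    (MeasureTheory.integrable_const c₀).add (hgint.const_mul c₁)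
  have hint_le : ∫ x, Real.exp (t * (m - g x)) ∂ν ≤ ∫ x, (c₀ + c₁ * g x) ∂ν :=
    MeasureTheory.integral_mono hlhs_int hrhs_int hpt
  have hrhs_eq : ∫ x, (c₀ + c₁ * g x) ∂ν = c₀ + c₁ * m := by
    rw [MeasureTheory.integral_add (MeasureTheory.integrable_const c₀) (hgint.const_mul c₁),
      MeasureTheory.integral_const, MeasureTheory.integral_const_mul]
    simp [hm]
  have hA2 : c₀ + c₁ * m ≤ Real.exp ((t * M) ^ 2 / 4) := by
    have := A2 (p := m / M) (u := t * M) (div_nonneg hm0 hM.le) ((div_le_one hM).mpr hmM)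
      (mul_nonneg ht hM.le) htM
    have he1 : m / M * (t * M) = t * m := by field_simp
    rw [he1] at this
    calc c₀ + c₁ * m = Real.exp (t * m) * (1 - m / M + m / M * Real.exp (-(t * M))) := by
          rw [hc₀, hc₁]; field_simp; ring
      _ ≤ Real.exp ((t * M) ^ 2 / 4) := this
  calc ∫ x, Real.exp (t * (m - g x)) ∂ν ≤ c₀ + c₁ * m := hrhs_eq ▸ hint_le
    _ ≤ _ := hA2

lemma chernoff_pi {α : Type*} [m0 : MeasurableSpace α] (ν : Measure α)
    [IsProbabilityMeasure ν] (g : α → ℝ) (hg : Measurable g) (M : ℝ) (hM : 0 < M)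
    (hgb : ∀ x, g x ∈ Set.Icc (0:ℝ) M) (μn : ℕ) (hμ : 1 ≤ μn)
    (ε : ℝ) (hε : 0 < ε) (hεM : ε ≤ M) :
    ((Measure.pi (fun _ : Fin μn => ν))
        {x | (μn : ℝ) * ε ≤ ∑ j : Fin μn, ((∫ y, g y ∂ν) - g (x j))}).toReal
      ≤ Real.exp (-((μn : ℝ) * ε ^ 2) / M ^ 2) := by
  letI : MeasureSpace α := { toMeasurableSpace := m0, volume := ν }
  haveI : IsProbabilityMeasure (volume : Measure α) := ‹IsProbabilityMeasure ν›
  set m := ∫ y, g y ∂ν with hm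
  set t := 2 * ε / M ^ 2 with htdef
  have ht : 0 ≤ t := by positivity
  have htM : t * M ≤ 2 := by
    rw [htdef]
    rw [div_mul_eq_mul_div, div_le_iff₀ (by positivity)]
    nlinarith
  set X : (Fin μn → α) → ℝ := fun x => ∑ j : Fin μn, (m - g (x j)) with hX
  have hXmeas : Measurable X :=
    Finset.measurable_sum Finset.univ fun j _ =>
      measurable_const.sub (hg.comp (measurable_pi_apply j))
  have hQ : (Measure.pi (fun _ : Fin μn => ν)) = (volume : Measure (Fin μn → α)) := rfl
  have h_int : Integrable (fun x => Real.exp (t * X x)) (volume : Measure (Fin μn → α)) := by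
    refine ⟨(Real.measurable_exp.comp (hXmeas.const_mul t)).aestronglyMeasurable,
      HasFiniteIntegral.of_bounded (C := Real.exp (t * (μn * M))) (ae_of_all _ fun x => ?_)⟩
    rw [Real.norm_eq_abs, abs_of_nonneg (Real.exp_nonneg _)]
    apply Real.exp_le_exp.mpr
    apply mul_le_mul_of_nonneg_left _ ht
    have hmM : m ≤ M := by
      have h := integral_mono (⟨hg.aestronglyMeasurable, HasFiniteIntegral.of_bounded (C := M)
        (ae_of_all _ fun x => by
          rw [Real.norm_eq_abs, abs_of_nonneg (hgb x).1]; exact (hgb x).2)⟩ :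
          Integrable g ν) (integrable_const M) (fun x => (hgb x).2)
      simpa using h
    calc X x ≤ ∑ _j : Fin μn, M := Finset.sum_le_sum fun j _ => by
          have := (hgb (x j)).1; linarith
      _ = (μn : ℝ) * M := by simp [mul_comm]
  have chern := measure_ge_le_exp_mul_mgf (μ := (volume : Measure (Fin μn → α))) (X := X)
    ((μn : ℝ) * ε) ht h_int
  have hmgf : mgf X (volume : Measure (Fin μn → α)) t ≤ (Real.exp ((t * M) ^ 2 / 4)) ^ μn := by
    have heq : mgf X (volume : Measure (Fin μn → α)) t
        = ∫ x : Fin μn → α, ∏ j : Fin μn, Real.exp (t * (m - g (x j))) := by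
      unfold mgf
      congr 1
      funext x
      simp only [hX]
      rw [Finset.mul_sum, Real.exp_sum]
    rw [heq, ← hQ, MeasureTheory.integral_fintype_prod_eq_pow (ι := Fin μn)
      (fun y => Real.exp (t * (m - g y)))]
    simp only [Fintype.card_fin]
    have hbase := mgf_bound ν g hg M hM hgb t ht htM
    have hbase0 : 0 ≤ ∫ y, Real.exp (t * (m - g y)) ∂ν :=
      integral_nonneg fun y => Real.exp_nonneg _
    exact pow_le_pow_left₀ hbase0 hbase μn
  calc ((Measure.pi (fun _ : Fin μn => ν))
        {x | (μn : ℝ) * ε ≤ X x}).toReal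
      ≤ Real.exp (-t * ((μn : ℝ) * ε)) * mgf X volume t := by rw [hQ]; exact chern
    _ ≤ Real.exp (-t * ((μn : ℝ) * ε)) * (Real.exp ((t * M) ^ 2 / 4)) ^ μn :=
        mul_le_mul_of_nonneg_left hmgf (Real.exp_nonneg _)
    _ = Real.exp (-((μn : ℝ) * ε ^ 2) / M ^ 2) := by
        rw [← Real.exp_nat_mul, ← Real.exp_add]
        congr 1
        rw [htdef]
        field_simp
        ring

section Blocking
variable {Ω 𝒵 : Type*} [MeasurableSpace Ω] [MeasurableSpace 𝒵]
  (P : Measure Ω) [IsProbabilityMeasure P] (Z : ℤ → Ω → 𝒵) (hZmeas : ∀ t, Measurable (Z t))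
  (a : ℕ)
include hZmeas

/-- one-cut bound -/
lemma cut_bound (t : ℤ) {γ₁ γ₂ : Type*} [MeasurableSpace γ₁] [MeasurableSpace γ₂]
    (g₁ : ({s : ℤ // s ≤ t} → 𝒵) → γ₁) (g₂ : ({s : ℤ // t + (a : ℤ) ≤ s} → 𝒵) → γ₂)
    (hg₁ : Measurable g₁) (hg₂ : Measurable g₂) :
    tvDist
      (P.map (fun ω => (g₁ (fun s => Z s ω), g₂ (fun s => Z s ω))))
      ((P.map (fun ω => g₁ (fun s => Z s ω))).prod (P.map (fun ω => g₂ (fun s => Z s ω))))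
      ≤ betaMix P Z a := by
  have hpast : Measurable (fun ω => fun s : {s : ℤ // s ≤ t} => Z s ω) :=
    measurable_pi_lambda _ fun s => hZmeas s
  have hfut : Measurable (fun ω => fun s : {s : ℤ // t + (a : ℤ) ≤ s} => Z s ω) :=
    measurable_pi_lambda _ fun s => hZmeas s
  have hpair : Measurable (fun ω => ((fun s : {s : ℤ // s ≤ t} => Z s ω),
      (fun s : {s : ℤ // t + (a : ℤ) ≤ s} => Z s ω))) := hpast.prodMk hfut
  haveI i1 : IsProbabilityMeasure (P.map (fun ω => fun s : {s : ℤ // s ≤ t} => Z s ω)) :=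
    Measure.isProbabilityMeasure_map hpast.aemeasurable
  haveI i2 : IsProbabilityMeasure
      (P.map (fun ω => fun s : {s : ℤ // t + (a : ℤ) ≤ s} => Z s ω)) :=
    Measure.isProbabilityMeasure_map hfut.aemeasurable
  haveI i3 : IsProbabilityMeasure (P.map (fun ω => ((fun s : {s : ℤ // s ≤ t} => Z s ω),
      (fun s : {s : ℤ // t + (a : ℤ) ≤ s} => Z s ω)))) :=
    Measure.isProbabilityMeasure_map hpair.aemeasurable
  have e1 : P.map (fun ω => (g₁ (fun s => Z s ω), g₂ (fun s => Z s ω)))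
      = (P.map (fun ω => ((fun s : {s : ℤ // s ≤ t} => Z s ω),
          (fun s : {s : ℤ // t + (a : ℤ) ≤ s} => Z s ω)))).map (Prod.map g₁ g₂) := by
    rw [Measure.map_map (hg₁.prodMap hg₂) hpair]
    rfl
  have e2 : (P.map (fun ω => g₁ (fun s => Z s ω))).prod (P.map (fun ω => g₂ (fun s => Z s ω)))
      = ((P.map (fun ω => fun s : {s : ℤ // s ≤ t} => Z s ω)).prod
          (P.map (fun ω => fun s : {s : ℤ // t + (a : ℤ) ≤ s} => Z s ω))).map
            (Prod.map g₁ g₂) := by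
    have h1 : P.map (fun ω => g₁ (fun s => Z s ω))
        = (P.map (fun ω => fun s : {s : ℤ // s ≤ t} => Z s ω)).map g₁ := by
      rw [Measure.map_map hg₁ hpast]; rfl
    have h2 : P.map (fun ω => g₂ (fun s => Z s ω))
        = (P.map (fun ω => fun s : {s : ℤ // t + (a : ℤ) ≤ s} => Z s ω)).map g₂ := by
      rw [Measure.map_map hg₂ hfut]; rfl
    rw [h1, h2, Measure.map_prod_map _ _ hg₁ hg₂]
  rw [e1, e2]
  have step := tvDist_map_le
    (P.map (fun ω => ((fun s : {s : ℤ // s ≤ t} => Z s ω),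
        (fun s : {s : ℤ // t + (a : ℤ) ≤ s} => Z s ω))))
    ((P.map (fun ω => fun s : {s : ℤ // s ≤ t} => Z s ω)).prod
        (P.map (fun ω => fun s : {s : ℤ // t + (a : ℤ) ≤ s} => Z s ω)))
    (hg₁.prodMap hg₂)
  refine step.trans ?_
  have hbdd : BddAbove (Set.range fun t : ℤ => tvDist
      (P.map (fun ω => ((fun s : {s : ℤ // s ≤ t} => Z s ω),
          (fun s : {s : ℤ // t + (a : ℤ) ≤ s} => Z s ω))))
      ((P.map (fun ω => fun s : {s : ℤ // s ≤ t} => Z s ω)).prod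
          (P.map (fun ω => fun s : {s : ℤ // t + (a : ℤ) ≤ s} => Z s ω)))) := by
    refine ⟨1, ?_⟩
    rintro x ⟨u, rfl⟩
    have hp : Measurable (fun ω => fun s : {s : ℤ // s ≤ u} => Z s ω) :=
      measurable_pi_lambda _ fun s => hZmeas s
    have hf : Measurable (fun ω => fun s : {s : ℤ // u + (a : ℤ) ≤ s} => Z s ω) :=
      measurable_pi_lambda _ fun s => hZmeas s
    haveI := Measure.isProbabilityMeasure_map (μ := P) hp.aemeasurable
    haveI := Measure.isProbabilityMeasure_map (μ := P) hf.aemeasurable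
    haveI := Measure.isProbabilityMeasure_map (μ := P) (hp.prodMk hf).aemeasurable
    exact tvDist_le_one _ _
  exact le_ciSup hbdd t


lemma blockMap_measurable (b : ℤ) : Measurable (blockMap Z a b) :=
  measurable_pi_lambda _ fun _ => hZmeas _

lemma blocking : ∀ (m : ℕ), 1 ≤ m → ∀ (b : Fin m → ℤ),
    (∀ i j : Fin m, (i : ℕ) < (j : ℕ) → b i + 2 * (a : ℤ) - 1 ≤ b j) →
    tvDist (P.map (fun ω (j : Fin m) => blockMap Z a (b j) ω))
      (Measure.pi (fun j => P.map (blockMap Z a (b j))))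
      ≤ ((m : ℝ) - 1) * betaMix P Z a := by
  intro m hm
  induction m, hm using Nat.le_induction with
  | base =>
    intro b _
    have hbm := blockMap_measurable Z hZmeas a (b 0)
    have hbs : (fun j : Fin 1 => P.map (blockMap Z a (b j)))
        = fun _ : Fin 1 => P.map (blockMap Z a (b 0)) := by
      funext j; rw [Subsingleton.elim j 0]
    have hvec : (fun ω (j : Fin 1) => blockMap Z a (b j) ω)
        = fun ω (_ : Fin 1) => blockMap Z a (b 0) ω := by
      funext ω j
      rw [Subsingleton.elim j 0]
    set e := MeasurableEquiv.funUnique (Fin 1) (Fin a → 𝒵) with he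
    have hpi : Measure.pi (fun _ : Fin 1 => P.map (blockMap Z a (b 0)))
        = (P.map (blockMap Z a (b 0))).map e.symm := by
      haveI : IsProbabilityMeasure (P.map (blockMap Z a (b 0))) :=
        Measure.isProbabilityMeasure_map hbm.aemeasurable
      have h := (measurePreserving_funUnique (P.map (blockMap Z a (b 0))) (Fin 1)).map_eq
      have hpi' : (P.map (blockMap Z a (b 0))).map e.symm
          = Measure.pi (fun _ : Fin 1 => P.map (blockMap Z a (b 0))) := by
        conv_lhs => rw [← h]
        rw [Measure.map_map e.symm.measurable e.measurable,
          MeasurableEquiv.symm_comp_self, Measure.map_id]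
        rfl
      exact hpi'.symm
    have hA : P.map (fun ω (j : Fin 1) => blockMap Z a (b j) ω)
        = (P.map (blockMap Z a (b 0))).map e.symm := by
      rw [hvec, Measure.map_map e.symm.measurable hbm]
      rfl
    rw [hbs, hpi, hA]
    have : tvDist ((P.map (blockMap Z a (b 0))).map e.symm)
        ((P.map (blockMap Z a (b 0))).map e.symm) = 0 := by
      unfold tvDist
      haveI : Nonempty {A : Set (Fin 1 → Fin a → 𝒵) // MeasurableSet A} :=
        ⟨⟨∅, MeasurableSet.empty⟩⟩
      simp
    rw [this]
    norm_num
  | succ m hm ih =>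
    intro b hgap
    set t : ℤ := b 0 + (a : ℤ) - 1 with htdef
    set g₁ : ({s : ℤ // s ≤ t} → 𝒵) → (Fin a → 𝒵) :=
      fun h i => h ⟨b 0 + ((i : ℕ) : ℤ), by have := i.isLt; omega⟩ with hg₁def
    set g₂ : ({s : ℤ // t + (a : ℤ) ≤ s} → 𝒵) → (Fin m → Fin a → 𝒵) :=
      fun h j i => h ⟨b j.succ + ((i : ℕ) : ℤ), by
        have hg := hgap 0 j.succ (by simp)
        have := i.isLt
        omega⟩ with hg₂def
    have hg₁ : Measurable g₁ := measurable_pi_lambda _ fun i => measurable_pi_apply _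
    have hg₂ : Measurable g₂ :=
      measurable_pi_lambda _ fun j => measurable_pi_lambda _ fun i => measurable_pi_apply _
    have hbm : ∀ c : ℤ, Measurable (blockMap Z a c) := blockMap_measurable Z hZmeas a
    have hvecmeas : Measurable (fun ω (j : Fin (m+1)) => blockMap Z a (b j) ω) :=
      measurable_pi_lambda _ fun j => hbm (b j)
    have htailmeas : Measurable (fun ω (j : Fin m) => blockMap Z a (b j.succ) ω) :=
      measurable_pi_lambda _ fun j => hbm (b j.succ)
    have hpairmeas : Measurable (fun ω => (blockMap Z a (b 0) ω,
        fun j : Fin m => blockMap Z a (b j.succ) ω)) := (hbm (b 0)).prodMk htailmeas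
    haveI imargs : ∀ j : Fin (m+1), IsProbabilityMeasure (P.map (blockMap Z a (b j))) :=
      fun j => Measure.isProbabilityMeasure_map (hbm (b j)).aemeasurable
    haveI imargs' : ∀ j : Fin m, IsProbabilityMeasure (P.map (blockMap Z a (b j.succ))) :=
      fun j => Measure.isProbabilityMeasure_map (hbm (b j.succ)).aemeasurable
    haveI itail : IsProbabilityMeasure
        (P.map (fun ω (j : Fin m) => blockMap Z a (b j.succ) ω)) :=
      Measure.isProbabilityMeasure_map htailmeas.aemeasurable
    haveI iJ : IsProbabilityMeasure (P.map (fun ω => (blockMap Z a (b 0) ω,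
        fun j : Fin m => blockMap Z a (b j.succ) ω))) :=
      Measure.isProbabilityMeasure_map hpairmeas.aemeasurable
    haveI iA : IsProbabilityMeasure (P.map (fun ω (j : Fin (m+1)) => blockMap Z a (b j) ω)) :=
      Measure.isProbabilityMeasure_map hvecmeas.aemeasurable
    set e := MeasurableEquiv.piFinSuccAbove (fun _ : Fin (m+1) => (Fin a → 𝒵)) 0 with hedef
    -- rewriting the joint law through e
    have hAe : (P.map (fun ω (j : Fin (m+1)) => blockMap Z a (b j) ω)).map e
        = P.map (fun ω => (blockMap Z a (b 0) ω,
            fun j : Fin m => blockMap Z a (b j.succ) ω)) := by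
      rw [Measure.map_map e.measurable hvecmeas]
      congr 1
    have hBe : (Measure.pi (fun j : Fin (m+1) => P.map (blockMap Z a (b j)))).map e
        = (P.map (blockMap Z a (b 0))).prod
            (Measure.pi (fun j : Fin m => P.map (blockMap Z a (b j.succ)))) := by
      have h := (measurePreserving_piFinSuccAbove
        (fun j : Fin (m+1) => P.map (blockMap Z a (b j))) 0).map_eq
      simp only [Fin.succAbove_zero] at h
      exact h
    -- the cut bound
    have hcut : tvDist
        (P.map (fun ω => (blockMap Z a (b 0) ω, fun j : Fin m => blockMap Z a (b j.succ) ω)))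
        ((P.map (blockMap Z a (b 0))).prod
          (P.map (fun ω (j : Fin m) => blockMap Z a (b j.succ) ω)))
        ≤ betaMix P Z a :=
      cut_bound P Z hZmeas a t g₁ g₂ hg₁ hg₂
    -- the IH
    have hgap' : ∀ i j : Fin m, (i : ℕ) < (j : ℕ) →
        b i.succ + 2 * (a : ℤ) - 1 ≤ b j.succ := fun i j hij =>
      hgap i.succ j.succ (by simpa using hij)
    have hih := ih (fun j => b j.succ) hgap'
    -- main chain
    have hback : ∀ κ : Measure (Fin (m+1) → Fin a → 𝒵), (κ.map e).map e.symm = κ := by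
      intro κ
      rw [Measure.map_map e.symm.measurable e.measurable,
        MeasurableEquiv.symm_comp_self, Measure.map_id]
    haveI iAe : IsProbabilityMeasure
        ((P.map (fun ω (j : Fin (m+1)) => blockMap Z a (b j) ω)).map e) :=
      Measure.isProbabilityMeasure_map e.measurable.aemeasurable
    haveI iBe : IsProbabilityMeasure
        ((Measure.pi (fun j : Fin (m+1) => P.map (blockMap Z a (b j)))).map e) :=
      Measure.isProbabilityMeasure_map e.measurable.aemeasurable
    have h1 : tvDist (P.map (fun ω (j : Fin (m+1)) => blockMap Z a (b j) ω))
        (Measure.pi (fun j : Fin (m+1) => P.map (blockMap Z a (b j))))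
        ≤ tvDist ((P.map (fun ω (j : Fin (m+1)) => blockMap Z a (b j) ω)).map e)
          ((Measure.pi (fun j : Fin (m+1) => P.map (blockMap Z a (b j)))).map e) := by
      have h2 := tvDist_map_le
        ((P.map (fun ω (j : Fin (m+1)) => blockMap Z a (b j) ω)).map e)
        ((Measure.pi (fun j : Fin (m+1) => P.map (blockMap Z a (b j)))).map e)
        e.symm.measurable
      rwa [hback, hback] at h2
    refine h1.trans ?_
    rw [hAe, hBe]
    have htri := tvDist_triangle
      (P.map (fun ω => (blockMap Z a (b 0) ω, fun j : Fin m => blockMap Z a (b j.succ) ω)))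
      ((P.map (blockMap Z a (b 0))).prod
        (Measure.pi (fun j : Fin m => P.map (blockMap Z a (b j.succ)))))
      ((P.map (blockMap Z a (b 0))).prod
        (P.map (fun ω (j : Fin m) => blockMap Z a (b j.succ) ω)))
    refine htri.trans ?_
    have hprod := tvDist_prod_right (P.map (blockMap Z a (b 0)))
      (P.map (fun ω (j : Fin m) => blockMap Z a (b j.succ) ω))
      (Measure.pi (fun j : Fin m => P.map (blockMap Z a (b j.succ))))
    have hfin : tvDist
        ((P.map (blockMap Z a (b 0))).prod
          (P.map (fun ω (j : Fin m) => blockMap Z a (b j.succ) ω)))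
        ((P.map (blockMap Z a (b 0))).prod
          (Measure.pi (fun j : Fin m => P.map (blockMap Z a (b j.succ)))))
        ≤ ((m : ℝ) - 1) * betaMix P Z a := hprod.trans hih
    have : (((m : ℕ) + 1 : ℕ) : ℝ) - 1 = 1 + ((m : ℝ) - 1) := by push_cast; ring
    rw [this, add_mul, one_mul]
    exact add_le_add hcut hfin

end Blocking

section Stat
variable {Ω 𝒵 : Type*} [MeasurableSpace Ω] [MeasurableSpace 𝒵]
  (P : Measure Ω) [IsProbabilityMeasure P] (Z : ℤ → Ω → 𝒵) (hZmeas : ∀ t, Measurable (Z t))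
  (hstat : Stationary P Z) (a : ℕ)
include hZmeas hstat

lemma path_measurable (s : ℤ) : Measurable (fun ω => fun t : ℤ => Z (t + s) ω) :=
  measurable_pi_lambda _ fun t => hZmeas _

omit hstat in
lemma blockMap_measurable' (b : ℤ) : Measurable (blockMap Z a b) :=
  measurable_pi_lambda _ fun _ => hZmeas _

lemma coord_law (c : ℤ) : P.map (Z c) = P.map (Z 1) := by
  have hpath : ∀ s : ℤ, Measurable (fun ω => fun t : ℤ => Z (t + s) ω) :=
    fun s => measurable_pi_lambda _ fun t => hZmeas _
  have hpath0 : Measurable (fun ω => fun t : ℤ => Z t ω) :=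
    measurable_pi_lambda _ fun t => hZmeas _
  have h1 : P.map (Z c) = (P.map (fun ω (t : ℤ) => Z (t + (c - 1)) ω)).map (fun g => g 1) := by
    rw [Measure.map_map (measurable_pi_apply 1) (hpath _)]
    congr 1
    funext ω
    show Z c ω = Z (1 + (c - 1)) ω
    congr 1
    ring
  rw [h1, hstat (c - 1), Measure.map_map (measurable_pi_apply 1) hpath0]
  rfl

lemma block_law (c : ℤ) : P.map (blockMap Z a c) = P.map (blockMap Z a 1) := by
  have hpath : ∀ s : ℤ, Measurable (fun ω => fun t : ℤ => Z (t + s) ω) :=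
    fun s => measurable_pi_lambda _ fun t => hZmeas _
  have hpath0 : Measurable (fun ω => fun t : ℤ => Z t ω) :=
    measurable_pi_lambda _ fun t => hZmeas _
  set proj : (ℤ → 𝒵) → (Fin a → 𝒵) := fun g i => g (1 + ((i : ℕ) : ℤ)) with hproj
  have hprojmeas : Measurable proj := measurable_pi_lambda _ fun i => measurable_pi_apply _
  have h1 : P.map (blockMap Z a c) = (P.map (fun ω (t : ℤ) => Z (t + (c - 1)) ω)).map proj := by
    rw [Measure.map_map hprojmeas (hpath _)]
    congr 1
    funext ω
    funext i
    show Z (c + (i : ℕ)) ω = Z ((1 + ((i : ℕ) : ℤ)) + (c - 1)) ω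
    congr 1
    ring
  rw [h1, hstat (c - 1), Measure.map_map hprojmeas hpath0]
  rfl

lemma integrable_of_icc {f : 𝒵 → ℝ} (hf : Measurable f) {M : ℝ}
    (hb : ∀ z, f z ∈ Set.Icc (0:ℝ) M) (c : ℤ) :
    Integrable (fun ω => f (Z c ω)) P := by
  refine ⟨(hf.comp (hZmeas c)).aestronglyMeasurable,
    HasFiniteIntegral.of_bounded (C := M) (ae_of_all _ fun ω => ?_)⟩
  rw [Real.norm_eq_abs, abs_of_nonneg (hb _).1]
  exact (hb _).2

lemma coord_integral (f : 𝒵 → ℝ) (hf : Measurable f) {M : ℝ}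
    (hb : ∀ z, f z ∈ Set.Icc (0:ℝ) M) (c : ℤ) :
    ∫ ω, f (Z c ω) ∂P = ∫ ω, f (Z 1 ω) ∂P := by
  rw [← integral_map (hZmeas c).aemeasurable hf.aestronglyMeasurable,
    coord_law P Z hZmeas hstat c,
    integral_map (hZmeas 1).aemeasurable hf.aestronglyMeasurable]

lemma mean_block (ha : 1 ≤ a) (f : 𝒵 → ℝ) (hf : Measurable f) {M : ℝ}
    (hb : ∀ z, f z ∈ Set.Icc (0:ℝ) M) :
    ∫ y, (1 / (a : ℝ)) * ∑ i : Fin a, f (y i) ∂(P.map (blockMap Z a 1))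
      = ∫ ω, f (Z 1 ω) ∂P := by
  have hbm := blockMap_measurable' Z hZmeas a (1 : ℤ)
  have hFmeas : Measurable (fun y : Fin a → 𝒵 => (1 / (a : ℝ)) * ∑ i : Fin a, f (y i)) :=
    (Finset.measurable_sum Finset.univ fun i _ =>
      hf.comp (measurable_pi_apply i)).const_mul _
  rw [integral_map hbm.aemeasurable hFmeas.aestronglyMeasurable]
  have : ∫ ω, (1 / (a : ℝ)) * ∑ i : Fin a, f (blockMap Z a 1 ω i) ∂P
      = (1 / (a : ℝ)) * ∑ i : Fin a, ∫ ω, f (blockMap Z a 1 ω i) ∂P := by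
    rw [integral_const_mul]
    congr 1
    exact integral_finset_sum Finset.univ fun i _ =>
      integrable_of_icc P Z hZmeas hstat hf hb _
  rw [this]
  have heach : ∀ i : Fin a, ∫ ω, f (blockMap Z a 1 ω i) ∂P = ∫ ω, f (Z 1 ω) ∂P := by
    intro i
    exact coord_integral P Z hZmeas hstat f hf hb _
  rw [Finset.sum_congr rfl fun i _ => heach i, Finset.sum_const]
  simp only [Finset.card_univ, Fintype.card_fin, nsmul_eq_mul]
  have haR : (a : ℝ) ≠ 0 := Nat.cast_ne_zero.mpr (by omega)
  field_simp
end Stat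


/-- Deviation bound on the odd or even blocks (inequality (9) in the paper): for a
quantized class `ℱ` of cardinality at most `2^(Bp)` of `[0,M]`-valued losses, and for
`k ∈ {1,2}`, the probability that some `f ∈ ℱ` has a deviation at least `ε` between
its risk `L f = E[f (Z 1)]` and its empirical block average
`(1/μ) ∑_{j=0}^{μ-1} h_f(B_{k+2j})` is at most
`2^(Bp) exp(-με²/M²) + (μ-1)β(a)`. -/
theorem block_deviation_bound
    {Ω 𝒵 : Type*} [MeasurableSpace Ω] [MeasurableSpace 𝒵]
    (P : Measure Ω) [IsProbabilityMeasure P]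
    (Z : ℤ → Ω → 𝒵) (hZmeas : ∀ t, Measurable (Z t))
    (hstat : Stationary P Z)
    (a μ : ℕ) (ha : 1 ≤ a) (hμ : 1 ≤ μ)
    (n : ℕ) (hn : n = 2 * a * μ)
    (M : ℝ) (hM : 0 < M)
    (B p : ℕ) (hB : 0 < B) (hp : 0 < p)
    (ℱ : Finset (𝒵 → ℝ))
    (hFmeas : ∀ f ∈ ℱ, Measurable f)
    (hFbdd : ∀ f ∈ ℱ, ∀ z, f z ∈ Set.Icc (0 : ℝ) M)
    (hcard : ℱ.card ≤ 2 ^ (B * p))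
    (k : ℕ) (hk : k = 1 ∨ k = 2)
    (ε : ℝ) (hε : 0 < ε) :
    (P {ω | ∃ f ∈ ℱ,
        ∫ ω', f (Z 1 ω') ∂P
          - (1 / μ) * ∑ j : Fin μ, (1 / a) *
              ∑ i : Fin a, f (Z ((a * (k + 2 * (j : ℕ) - 1) + (i : ℕ) + 1 : ℕ) : ℤ) ω)
          ≥ ε}).toReal
      ≤ (2 : ℝ) ^ (B * p) * Real.exp (-(μ * ε ^ 2) / M ^ 2)
        + ((μ : ℝ) - 1) * betaMix P Z a := by
  classical
  have hβ0 : 0 ≤ betaMix P Z a := betaMix_nonneg P Z a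
  have hμ1R : (1 : ℝ) ≤ (μ : ℝ) := by exact_mod_cast hμ
  have ha1R : (1 : ℝ) ≤ (a : ℝ) := by exact_mod_cast ha
  have hrhs2 : 0 ≤ ((μ : ℝ) - 1) * betaMix P Z a := mul_nonneg (by linarith) hβ0
  have hk1 : 1 ≤ k := by rcases hk with h | h <;> omega
  rcases le_or_gt ε M with hεM | hεM
  · -- main case : ε ≤ M
    have hbm : ∀ c : ℤ, Measurable (blockMap Z a c) :=
      fun c => measurable_pi_lambda _ fun _ => hZmeas _
    set ν : Measure (Fin a → 𝒵) := P.map (blockMap Z a 1) with hν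
    haveI hνP : IsProbabilityMeasure ν := Measure.isProbabilityMeasure_map (hbm 1).aemeasurable
    set Q : Measure (Fin μ → Fin a → 𝒵) := Measure.pi (fun _ => ν) with hQ
    haveI hQP : IsProbabilityMeasure Q := by rw [hQ]; infer_instance
    set V : Ω → (Fin μ → Fin a → 𝒵) :=
      fun ω j i => Z ((a * (k + 2 * (j : ℕ) - 1) + (i : ℕ) + 1 : ℕ) : ℤ) ω with hV
    have hVmeas : Measurable V :=
      measurable_pi_lambda _ fun j => measurable_pi_lambda _ fun i => hZmeas _
    haveI : IsProbabilityMeasure (P.map V) := Measure.isProbabilityMeasure_map hVmeas.aemeasurable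
    set S : Set (Fin μ → Fin a → 𝒵) := {x | ∃ f ∈ ℱ,
        ∫ ω', f (Z 1 ω') ∂P
          - (1 / μ) * ∑ j : Fin μ, (1 / a) * ∑ i : Fin a, f (x j i) ≥ ε} with hS
    have hfmeas' : ∀ f ∈ ℱ, Measurable (fun x : Fin μ → Fin a → 𝒵 =>
        ∫ ω', f (Z 1 ω') ∂P
          - (1 / (μ : ℝ)) * ∑ j : Fin μ, (1 / (a : ℝ)) * ∑ i : Fin a, f (x j i)) := by
      intro f hf
      apply Measurable.sub measurable_const
      apply Measurable.const_mul
      apply Finset.measurable_sum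
      intro j _
      apply Measurable.const_mul
      apply Finset.measurable_sum
      intro i _
      exact (hFmeas f hf).comp ((measurable_pi_apply i).comp (measurable_pi_apply j))
    have hSmeas : MeasurableSet S := by
      have hrepr : S = ⋃ f ∈ ℱ, {x : Fin μ → Fin a → 𝒵 | ε ≤
          ∫ ω', f (Z 1 ω') ∂P
            - (1 / (μ : ℝ)) * ∑ j : Fin μ, (1 / (a : ℝ)) * ∑ i : Fin a, f (x j i)} := by
        rw [hS]
        ext x
        simp only [Set.mem_setOf_eq, Set.mem_iUnion, exists_prop, ge_iff_le]
      rw [hrepr]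
      exact ℱ.measurableSet_biUnion fun f hf =>
        measurableSet_le measurable_const (hfmeas' f hf)
    -- blocking
    set b : Fin μ → ℤ := fun j => ((a * (k + 2 * (j : ℕ) - 1) + 1 : ℕ) : ℤ) with hb
    have hVb : V = fun ω (j : Fin μ) => blockMap Z a (b j) ω := by
      funext ω j i
      show Z ((a * (k + 2 * (j : ℕ) - 1) + (i : ℕ) + 1 : ℕ) : ℤ) ω = Z (b j + ((i : ℕ) : ℤ)) ω
      congr 1
      rw [hb]
      rw [show a * (k + 2 * (j : ℕ) - 1) + (i : ℕ) + 1
        = (a * (k + 2 * (j : ℕ) - 1) + 1) + (i : ℕ) from by ring, Nat.cast_add]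
    have hgap : ∀ i j : Fin μ, (i : ℕ) < (j : ℕ) → b i + 2 * (a : ℤ) - 1 ≤ b j := by
      intro i j hij
      have h1 : k + 2 * (i : ℕ) - 1 + 2 ≤ k + 2 * (j : ℕ) - 1 := by omega
      have h3 : a * (k + 2 * (i : ℕ) - 1 + 2) = a * (k + 2 * (i : ℕ) - 1) + 2 * a := by ring
      have h4 := Nat.mul_le_mul_left a h1
      have h2 : a * (k + 2 * (i : ℕ) - 1) + 1 + 2 * a ≤ a * (k + 2 * (j : ℕ) - 1) + 1 := by
        omega
      have h2' : ((a * (k + 2 * (i : ℕ) - 1) + 1 : ℕ) : ℤ) + 2 * (a : ℤ)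
          ≤ ((a * (k + 2 * (j : ℕ) - 1) + 1 : ℕ) : ℤ) := by exact_mod_cast h2
      simp only [hb]
      omega
    have hblocking := blocking P Z hZmeas a μ hμ b hgap
    have hmargν : ∀ j : Fin μ, P.map (blockMap Z a (b j)) = ν :=
      fun j => block_law P Z hZmeas hstat a (b j)
    have hpiQ : (Measure.pi fun j : Fin μ => P.map (blockMap Z a (b j))) = Q := by
      rw [hQ]
      congr 1
      funext j
      exact hmargν j
    have htv : tvDist (P.map V) Q ≤ ((μ : ℝ) - 1) * betaMix P Z a := by
      rw [hVb, ← hpiQ]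
      exact hblocking
    have habs := abs_sub_le_tvDist (P.map V) Q hSmeas
    have hkey : ((P.map V) S).toReal ≤ (Q S).toReal + ((μ : ℝ) - 1) * betaMix P Z a := by
      have h1 := (abs_le.mp habs).2
      linarith [htv]
    -- Chernoff + union bound
    set T : (𝒵 → ℝ) → Set (Fin μ → Fin a → 𝒵) := fun f =>
      {x | (μ : ℝ) * ε ≤ ∑ j : Fin μ,
        ((∫ y, (1 / (a : ℝ)) * ∑ i : Fin a, f (y i) ∂ν)
          - (1 / (a : ℝ)) * ∑ i : Fin a, f (x j i))} with hT
    have hTbound : ∀ f ∈ ℱ, (Q (T f)).toReal ≤ Real.exp (-((μ : ℝ) * ε ^ 2) / M ^ 2) := by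
      intro f hf
      have hg : Measurable (fun y : Fin a → 𝒵 => (1 / (a : ℝ)) * ∑ i : Fin a, f (y i)) :=
        (Finset.measurable_sum Finset.univ fun i _ =>
          (hFmeas f hf).comp (measurable_pi_apply i)).const_mul _
      have hgb : ∀ y : Fin a → 𝒵, (1 / (a : ℝ)) * ∑ i : Fin a, f (y i) ∈ Set.Icc (0:ℝ) M := by
        intro y
        constructor
        · exact mul_nonneg (by positivity) (Finset.sum_nonneg fun i _ => (hFbdd f hf _).1)
        · have hsum : ∑ i : Fin a, f (y i) ≤ (a : ℝ) * M := by
            calc ∑ i : Fin a, f (y i) ≤ ∑ _i : Fin a, M :=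
                Finset.sum_le_sum fun i _ => (hFbdd f hf _).2
              _ = (a : ℝ) * M := by simp [mul_comm]
          have ha0 : (0 : ℝ) < (a : ℝ) := by linarith
          calc (1 / (a : ℝ)) * ∑ i : Fin a, f (y i)
              ≤ (1 / (a : ℝ)) * ((a : ℝ) * M) := by
                apply mul_le_mul_of_nonneg_left hsum (by positivity)
            _ = M := by field_simp
      exact chernoff_pi ν _ hg M hM hgb μ hμ ε hε hεM
    have hsub : S ⊆ ⋃ f ∈ ℱ, T f := by
      rintro x hx
      rw [hS] at hx
      obtain ⟨f, hf, hge⟩ := hx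
      refine Set.mem_biUnion hf ?_
      have hmean : ∫ y, (1 / (a : ℝ)) * ∑ i : Fin a, f (y i) ∂ν = ∫ ω', f (Z 1 ω') ∂P :=
        mean_block P Z hZmeas hstat a ha f (hFmeas f hf) (hFbdd f hf)
      rw [hT]
      show (μ : ℝ) * ε ≤ ∑ j : Fin μ,
        ((∫ y, (1 / (a : ℝ)) * ∑ i : Fin a, f (y i) ∂ν)
          - (1 / (a : ℝ)) * ∑ i : Fin a, f (x j i))
      rw [hmean]
      set A := ∫ ω', f (Z 1 ω') ∂P with hA
      set Bv := ∑ j : Fin μ, (1 / (a : ℝ)) * ∑ i : Fin a, f (x j i) with hBv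
      have hsum : ∑ j : Fin μ, (A - (1 / (a : ℝ)) * ∑ i : Fin a, f (x j i))
          = (μ : ℝ) * A - Bv := by
        rw [Finset.sum_sub_distrib, Finset.sum_const]
        simp [hBv, nsmul_eq_mul]
      rw [hsum]
      have hge' : ε ≤ A - (1 / (μ : ℝ)) * Bv := hge
      have hμ0 : (0 : ℝ) < (μ : ℝ) := by linarith
      have hmul := mul_le_mul_of_nonneg_left hge' hμ0.le
      have heq : (μ : ℝ) * (A - (1 / (μ : ℝ)) * Bv) = (μ : ℝ) * A - Bv := by
        field_simp
      linarith [hmul, heq.le, heq.ge]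
    have hQS : (Q S).toReal ≤ (ℱ.card : ℝ) * Real.exp (-((μ : ℝ) * ε ^ 2) / M ^ 2) := by
      have h1 : Q S ≤ ∑ f ∈ ℱ, Q (T f) :=
        (measure_mono hsub).trans (measure_biUnion_finset_le ℱ T)
      have hne : (∑ f ∈ ℱ, Q (T f)) ≠ ⊤ :=
        (ENNReal.sum_lt_top.mpr fun f _ => measure_lt_top Q _).ne
      have h2 : (Q S).toReal ≤ (∑ f ∈ ℱ, Q (T f)).toReal := ENNReal.toReal_mono hne h1
      rw [ENNReal.toReal_sum (fun f _ => measure_ne_top Q _)] at h2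
      refine h2.trans ?_
      calc ∑ f ∈ ℱ, (Q (T f)).toReal
          ≤ ∑ _f ∈ ℱ, Real.exp (-((μ : ℝ) * ε ^ 2) / M ^ 2) := Finset.sum_le_sum hTbound
        _ = (ℱ.card : ℝ) * Real.exp (-((μ : ℝ) * ε ^ 2) / M ^ 2) := by
            rw [Finset.sum_const, nsmul_eq_mul]
    have hcardR : (ℱ.card : ℝ) ≤ (2 : ℝ) ^ (B * p) := by exact_mod_cast hcard
    have hfinal : ((P.map V) S).toReal
        ≤ (2 : ℝ) ^ (B * p) * Real.exp (-((μ : ℝ) * ε ^ 2) / M ^ 2)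
          + ((μ : ℝ) - 1) * betaMix P Z a := by
      have hexp : (0 : ℝ) < Real.exp (-((μ : ℝ) * ε ^ 2) / M ^ 2) := Real.exp_pos _
      have := mul_le_mul_of_nonneg_right hcardR hexp.le
      linarith [hkey, hQS]
    have hmapped : (P.map V) S = P {ω | ∃ f ∈ ℱ,
        ∫ ω', f (Z 1 ω') ∂P
          - (1 / μ) * ∑ j : Fin μ, (1 / a) *
              ∑ i : Fin a, f (Z ((a * (k + 2 * (j : ℕ) - 1) + (i : ℕ) + 1 : ℕ) : ℤ) ω)
          ≥ ε} := by
      rw [Measure.map_apply hVmeas hSmeas]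
      rfl
    rw [← hmapped]
    exact hfinal
  · -- ε > M : the event is empty
    have hempty : {ω | ∃ f ∈ ℱ,
        ∫ ω', f (Z 1 ω') ∂P
          - (1 / μ) * ∑ j : Fin μ, (1 / a) *
              ∑ i : Fin a, f (Z ((a * (k + 2 * (j : ℕ) - 1) + (i : ℕ) + 1 : ℕ) : ℤ) ω)
          ≥ ε} = (∅ : Set Ω) := by
      rw [Set.eq_empty_iff_forall_notMem]
      rintro ω ⟨f, hf, hge⟩
      have hL : ∫ ω', f (Z 1 ω') ∂P ≤ M := by
        have h := integral_mono (integrable_of_icc P Z hZmeas hstat (hFmeas f hf) (hFbdd f hf) 1)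
          (integrable_const M) (fun ω' => (hFbdd f hf _).2)
        simpa using h
      have havg : 0 ≤ (1 / (μ : ℝ)) * ∑ j : Fin μ, (1 / (a : ℝ)) *
          ∑ i : Fin a, f (Z ((a * (k + 2 * (j : ℕ) - 1) + (i : ℕ) + 1 : ℕ) : ℤ) ω) := by
        apply mul_nonneg (by positivity)
        apply Finset.sum_nonneg
        intro j _
        apply mul_nonneg (by positivity)
        exact Finset.sum_nonneg fun i _ => (hFbdd f hf _).1
      have hge' : ε ≤ ∫ ω', f (Z 1 ω') ∂P - (1 / (μ : ℝ)) * ∑ j : Fin μ, (1 / (a : ℝ)) *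
          ∑ i : Fin a, f (Z ((a * (k + 2 * (j : ℕ) - 1) + (i : ℕ) + 1 : ℕ) : ℤ) ω) := hge
      linarith
    rw [hempty]
    simp only [measure_empty, ENNReal.toReal_zero]
    have hexp : (0 : ℝ) < Real.exp (-((μ : ℝ) * ε ^ 2) / M ^ 2) := Real.exp_pos _
    have hpow : (0 : ℝ) < (2 : ℝ) ^ (B * p) := by positivity
    nlinarith [mul_pos hpow hexp]
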